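/- Every basic optimal solution of the vertex cover LP relaxation of a finite simple graph is half-integral: every vertex receives value 0, 1/2, or 1. -/

import Mathlib

open Finset

/-- `θ` is a fractional vertex cover of `G` (feasible point of the VC LP). -/
def IsFracCover {V : Type*} (G : SimpleGraph V) (θ : V → ℝ) : Prop :=
  (∀ v, 0 ≤ θ v ∧ θ v ≤ 1) ∧ ∀ u v, G.Adj u v → 1 ≤ θ u + θ v

/-- Perturbation direction: +1 on (0,1/2), -1 on (1/2,1), 0 at 0, 1/2, 1. -/
noncomputable def VCdir (x : ℝ) : ℝ :=
  if 0 < x ∧ x < 1/2 then 1 else if 1/2 < x ∧ x < 1 then -1 else 0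

/-- Room to move before hitting 0, 1/2, or 1. -/
noncomputable def VCroom (x : ℝ) : ℝ :=
  if 0 < x ∧ x < 1/2 then min x (1/2 - x)
  else if 1/2 < x ∧ x < 1 then min (x - 1/2) (1 - x) else 1

lemma VCdir_bd (x : ℝ) : -1 ≤ VCdir x ∧ VCdir x ≤ 1 := by
  unfold VCdir; split_ifs <;> norm_num

lemma VCdir_ne (x : ℝ) (h0 : 0 ≤ x) (h1 : x ≤ 1) (hx0 : x ≠ 0) (hxh : x ≠ 1/2)
    (hx1 : x ≠ 1) : VCdir x ≠ 0 := by
  unfold VCdir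
  rcases lt_trichotomy x (1/2) with h | h | h
  · rw [if_pos ⟨lt_of_le_of_ne h0 (Ne.symm hx0), h⟩]; norm_num
  · exact absurd h hxh
  · rw [if_neg (fun hc => absurd h (not_lt.2 hc.2.le)),
      if_pos ⟨h, lt_of_le_of_ne h1 hx1⟩]; norm_num

lemma VCdir_sum (a b : ℝ) (hab : a + b = 1) : VCdir a + VCdir b = 0 := by
  unfold VCdir
  by_cases ha : 0 < a ∧ a < 1/2
  · have hv1 : 1/2 < b := by linarith [ha.2]
    have hv2 : b < 1 := by linarith [ha.1]
    rw [if_pos ha, if_neg (fun hc => absurd hv1 (not_lt.2 hc.2.le)), if_pos ⟨hv1, hv2⟩]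
    ring
  · by_cases hb : 1/2 < a ∧ a < 1
    · have hv1 : 0 < b := by linarith [hb.2]
      have hv2 : b < 1/2 := by linarith [hb.1]
      rw [if_neg ha, if_pos hb, if_pos ⟨hv1, hv2⟩]; ring
    · have hva : ¬(0 < b ∧ b < 1/2) := fun hc => hb ⟨by linarith [hc.2], by linarith [hc.1]⟩
      have hvb : ¬(1/2 < b ∧ b < 1) := fun hc => ha ⟨by linarith [hc.2], by linarith [hc.1]⟩
      rw [if_neg ha, if_neg hb, if_neg hva, if_neg hvb]; ring

lemma VCroom_pos (x : ℝ) : 0 < VCroom x := by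
  unfold VCroom
  split_ifs with h1 h2
  · exact lt_min h1.1 (by linarith [h1.2])
  · exact lt_min (by linarith [h2.1]) (by linarith [h2.2])
  · norm_num

lemma VCpert (x ε : ℝ) (hε : 0 < ε) (hεr : ε ≤ VCroom x) (h0 : 0 ≤ x) (h1 : x ≤ 1) :
    (0 ≤ x + ε * VCdir x ∧ x + ε * VCdir x ≤ 1) ∧
    (0 ≤ x - ε * VCdir x ∧ x - ε * VCdir x ≤ 1) := by
  unfold VCroom at hεr
  unfold VCdir
  split_ifs at hεr ⊢ with ha hb
  · have l1 := min_le_left x (1/2 - x)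
    have l2 := min_le_right x (1/2 - x)
    constructor <;> constructor <;> linarith
  · have l1 := min_le_left (x - 1/2) (1 - x)
    have l2 := min_le_right (x - 1/2) (1 - x)
    constructor <;> constructor <;> linarith
  · constructor <;> constructor <;> linarith

/-- Every basic (extreme-point) optimal solution of the vertex cover LP is half-integral. -/
theorem basic_optimal_solution_half_integral {V : Type*} [Fintype V] (G : SimpleGraph V)
    (θ : V → ℝ) (hθ : IsFracCover G θ)
    (hopt : ∀ η : V → ℝ, IsFracCover G η → ∑ v, θ v ≤ ∑ v, η v)
    (hextreme : ∀ θ₁ θ₂ : V → ℝ, IsFracCover G θ₁ → IsFracCover G θ₂ →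
      (∀ v, θ v = (θ₁ v + θ₂ v) / 2) → θ₁ = θ₂) :
    ∀ v, θ v = 0 ∨ θ v = 1/2 ∨ θ v = 1 := by
  classical
  intro v₀
  by_contra hc
  push_neg at hc
  obtain ⟨h0, hhalf, h1⟩ := hc
  obtain ⟨hbd, hedge⟩ := hθ
  have hδ0 : VCdir (θ v₀) ≠ 0 :=
    VCdir_ne _ (hbd v₀).1 (hbd v₀).2 h0 hhalf h1
  have hnv : (univ : Finset V).Nonempty := ⟨v₀, mem_univ v₀⟩
  set g : V × V → ℝ :=
    fun p => if 1 < θ p.1 + θ p.2 then (θ p.1 + θ p.2 - 1) / 2 else 1 with hgdef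
  set ε : ℝ := min (univ.inf' hnv fun v => VCroom (θ v))
      ((univ ×ˢ univ).inf' (hnv.product hnv) g) with hεdef
  have hεpos : 0 < ε := by
    apply lt_min
    · exact (Finset.lt_inf'_iff _).2 fun v _ => VCroom_pos (θ v)
    · refine (Finset.lt_inf'_iff _).2 fun p _ => ?_
      simp only [hgdef]
      split_ifs with h
      · linarith
      · norm_num
  have hεr : ∀ v, ε ≤ VCroom (θ v) := fun v =>
    le_trans (min_le_left _ _) (Finset.inf'_le _ (mem_univ v))
  have hεg : ∀ u v, ε ≤ g (u, v) := fun u v =>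
    le_trans (min_le_right _ _)
      (Finset.inf'_le _ (mem_product.2 ⟨mem_univ u, mem_univ v⟩))
  have hedge2 : ∀ u v, G.Adj u v →
      1 ≤ (θ u + ε * VCdir (θ u)) + (θ v + ε * VCdir (θ v)) ∧
      1 ≤ (θ u - ε * VCdir (θ u)) + (θ v - ε * VCdir (θ v)) := by
    intro u v huv
    have he := hedge u v huv
    rcases eq_or_lt_of_le he with heq | hlt
    · have hsum := VCdir_sum (θ u) (θ v) heq.symm
      have hz : ε * VCdir (θ u) + ε * VCdir (θ v) = 0 := by
        rw [← mul_add, hsum, mul_zero]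
      constructor <;> linarith
    · have hg := hεg u v
      simp only [hgdef, if_pos hlt] at hg
      have b1 := mul_le_mul_of_nonneg_left (VCdir_bd (θ u)).1 hεpos.le
      have b2 := mul_le_mul_of_nonneg_left (VCdir_bd (θ u)).2 hεpos.le
      have b3 := mul_le_mul_of_nonneg_left (VCdir_bd (θ v)).1 hεpos.le
      have b4 := mul_le_mul_of_nonneg_left (VCdir_bd (θ v)).2 hεpos.le
      constructor <;> nlinarith
  have hfeas1 : IsFracCover G (fun v => θ v + ε * VCdir (θ v)) := by
    constructor
    · intro v
      exact (VCpert (θ v) ε hεpos (hεr v) (hbd v).1 (hbd v).2).1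
    · intro u v huv
      exact (hedge2 u v huv).1
  have hfeas2 : IsFracCover G (fun v => θ v - ε * VCdir (θ v)) := by
    constructor
    · intro v
      exact (VCpert (θ v) ε hεpos (hεr v) (hbd v).1 (hbd v).2).2
    · intro u v huv
      exact (hedge2 u v huv).2
  have heq := hextreme _ _ hfeas1 hfeas2 (fun v => by ring)
  have := congrFun heq v₀
  have this : θ v₀ + ε * VCdir (θ v₀) = θ v₀ - ε * VCdir (θ v₀) := this
  have : ε * VCdir (θ v₀) = 0 := by linarith
  rcases mul_eq_zero.1 this with h | h
  · exact absurd h hεpos.ne'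
  · exact hδ0 h
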